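/- Let ω be a control on [0,T] (continuous, vanishing on the diagonal, superadditive: ω(s,u)+ω(u,t) ≤ ω(s,t) for s ≤ u ≤ t). For α ∈ (0,1], define ω^α(s,t) := sup over partitions D = {t_j} of [s,t] with ω(t_j, t_{j+1}) ≤ α for all j, of Σ_j ω(t_j, t_{j+1}). Then ω^α is itself a control: it is superadditive, monotone in the interval, and vanishes on the diagonal. -/
import Mathlib


/-!
Statement 8: for a control `ω` on `[0,T]` and `α ∈ (0,1]`, the function
`ω^α(s,t) := sup { ∑_j ω(t_j,t_{j+1}) : partitions of [s,t] with ω(t_j,t_{j+1}) ≤ α }`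
is again a control: superadditive, monotone in the interval, and vanishing on
the diagonal.
-/

noncomputable section
open scoped BigOperators

/-- sums of `ω` over partitions of `[s,t]` all of whose pieces have `ω`-size `≤ α` -/
def partSums (ω : ℝ → ℝ → ℝ) (α s t : ℝ) : Set ℝ :=
  {x | ∃ (n : ℕ) (u : Fin (n + 1) → ℝ), Monotone u ∧ u 0 = s ∧ u (Fin.last n) = t ∧
      (∀ i : Fin n, ω (u i.castSucc) (u i.succ) ≤ α) ∧
      x = ∑ i : Fin n, ω (u i.castSucc) (u i.succ)}

/-- the truncated control `ω^α` -/
def omegaTrunc (ω : ℝ → ℝ → ℝ) (α s t : ℝ) : ℝ := sSup (partSums ω α s t)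

/-- membership from an `ℕ`-indexed partition -/
lemma partSums_of_nat (ω : ℝ → ℝ → ℝ) (α s t x : ℝ) (n : ℕ) (u : ℕ → ℝ)
    (hu : Monotone u) (h0 : u 0 = s) (hn : u n = t)
    (hstep : ∀ k < n, ω (u k) (u (k + 1)) ≤ α)
    (hx : x = ∑ k ∈ Finset.range n, ω (u k) (u (k + 1))) :
    x ∈ partSums ω α s t := by
  refine ⟨n, fun i => u i, ?_, ?_, ?_, ?_, ?_⟩
  · exact fun i j hij => hu (Fin.le_def.mp hij)
  · simpa using h0
  · simpa using hn
  · intro i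
    simpa [Fin.coe_castSucc, Fin.val_succ] using hstep i i.isLt
  · rw [hx, ← Fin.sum_univ_eq_sum_range fun k => ω (u k) (u (k + 1))]
    exact Finset.sum_congr rfl fun i _ => by simp [Fin.coe_castSucc, Fin.val_succ]

/-- an `ℕ`-indexed partition from membership -/
lemma nat_of_partSums {ω : ℝ → ℝ → ℝ} {α s t x : ℝ}
    (hx : x ∈ partSums ω α s t) :
    ∃ (n : ℕ) (u : ℕ → ℝ), Monotone u ∧ u 0 = s ∧ u n = t ∧
      (∀ k < n, ω (u k) (u (k + 1)) ≤ α) ∧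
      x = ∑ k ∈ Finset.range n, ω (u k) (u (k + 1)) := by
  obtain ⟨n, u, hmono, h0, hlast, hstep, hsum⟩ := hx
  refine ⟨n, fun k => u ⟨min k n, by omega⟩, ?_, ?_, ?_, ?_, ?_⟩
  · intro j k hjk
    exact hmono (by simp [Fin.le_def]; omega)
  · simpa using h0
  · simpa [Fin.last] using hlast
  · intro k hk
    have h1 : min k n = k := by omega
    have h2 : min (k + 1) n = k + 1 := by omega
    have := hstep ⟨k, hk⟩
    simp only [Fin.castSucc, Fin.succ, Fin.castAdd, Fin.castLE] at this
    simpa [h1, h2] using this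
  · rw [hsum, ← Fin.sum_univ_eq_sum_range]
    refine Finset.sum_congr rfl fun i _ => ?_
    have h1 : min (i : ℕ) n = (i : ℕ) := by omega
    have h2 : min ((i : ℕ) + 1) n = (i : ℕ) + 1 := by omega
    congr 1 <;> apply congrArg u <;> apply Fin.ext <;>
      simp [h1, h2, Fin.coe_castSucc, Fin.val_succ]

/-- every partition sum is nonnegative -/
lemma partSums_nonneg {ω : ℝ → ℝ → ℝ} {α s t x : ℝ}
    (hnonneg : ∀ s t, 0 ≤ ω s t) (hx : x ∈ partSums ω α s t) : 0 ≤ x := by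
  obtain ⟨n, u, -, -, -, -, hsum⟩ := hx
  exact hsum ▸ Finset.sum_nonneg fun i _ => hnonneg _ _

/-- concatenation of partitions -/
lemma partSums_add {ω : ℝ → ℝ → ℝ} {α a b c x y : ℝ}
    (hx : x ∈ partSums ω α a b) (hy : y ∈ partSums ω α b c) :
    x + y ∈ partSums ω α a c := by
  obtain ⟨m, u, humono, hu0, hum, hustep, hxsum⟩ := nat_of_partSums hx
  obtain ⟨n, v, hvmono, hv0, hvn, hvstep, hysum⟩ := nat_of_partSums hy
  set w : ℕ → ℝ := fun k => if k < m then u k else v (k - m) with hw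
  have hwlt : ∀ k, k < m → w k = u k := fun k hk => by simp [hw, hk]
  have hwge : ∀ k, m ≤ k → w k = v (k - m) := fun k hk => by
    simp [hw, Nat.not_lt.mpr hk]
  have hwm : ∀ k, k ≤ m → w k = u k := by
    intro k hk
    rcases lt_or_eq_of_le hk with h | h
    · exact hwlt k h
    · subst h; rw [hwge k le_rfl]; simp [hv0, hum]
  refine partSums_of_nat ω α a c (x + y) (m + n) w ?_ ?_ ?_ ?_ ?_
  · intro j k hjk
    rcases le_or_gt k m with hkm | hkm
    · rw [hwm j (hjk.trans hkm), hwm k hkm]; exact humono hjk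
    · rcases le_or_gt j m with hjm | hjm
      · rw [hwm j hjm, hwge k hkm.le]
        calc u j ≤ u m := humono hjm
          _ = v 0 := by rw [hum, hv0]
          _ ≤ v (k - m) := hvmono (Nat.zero_le _)
      · rw [hwge j hjm.le, hwge k hkm.le]
        exact hvmono (Nat.sub_le_sub_right hjk m)
  · rw [hwm 0 (Nat.zero_le _), hu0]
  · rw [hwge (m + n) (Nat.le_add_right _ _)]
    simpa using hvn
  · intro k hk
    rcases lt_or_ge k m with hkm | hkm
    · rw [hwlt k hkm, hwm (k + 1) hkm]
      exact hustep k hkm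
    · rw [hwge k hkm, hwge (k + 1) (hkm.trans (Nat.le_succ k))]
      have : k + 1 - m = (k - m) + 1 := by omega
      rw [this]
      exact hvstep (k - m) (by omega)
  · rw [hxsum, hysum, Finset.sum_range_add]
    congr 1
    · refine Finset.sum_congr rfl fun k hk => ?_
      have hk' := Finset.mem_range.mp hk
      rw [hwlt k hk', hwm (k + 1) hk']
    · refine Finset.sum_congr rfl fun k hk => ?_
      have h1 : w (m + k) = v k := by rw [hwge _ (Nat.le_add_right _ _)]; simp
      have h2 : w (m + k + 1) = v (k + 1) := by
        rw [hwge _ (by omega)]; congr 1; omega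
      rw [h1, h2]

/-- partition sums are bounded by `ω s t` -/
lemma partSums_bdd {T : ℝ} {ω : ℝ → ℝ → ℝ} {α s t : ℝ}
    (hnonneg : ∀ s t, 0 ≤ ω s t)
    (hsuper : ∀ s u t, 0 ≤ s → s ≤ u → u ≤ t → t ≤ T → ω s u + ω u t ≤ ω s t)
    (h0s : 0 ≤ s) (hst : s ≤ t) (htT : t ≤ T) :
    ∀ x ∈ partSums ω α s t, x ≤ ω s t := by
  intro x hx
  obtain ⟨n, u, hmono, h0, hn, -, hsum⟩ := nat_of_partSums hx
  have key : ∀ k, k ≤ n → (∑ j ∈ Finset.range k, ω (u j) (u (j + 1))) ≤ ω s (u k) := by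
    intro k
    induction k with
    | zero => intro _; simpa [h0] using hnonneg s s
    | succ k ih =>
      intro hk
      rw [Finset.sum_range_succ]
      have h1 := ih (by omega)
      have h2 : ω s (u k) + ω (u k) (u (k + 1)) ≤ ω s (u (k + 1)) := by
        refine hsuper s (u k) (u (k + 1)) h0s ?_ (hmono (Nat.le_succ k)) ?_
        · rw [← h0]; exact hmono (Nat.zero_le _)
        · calc u (k + 1) ≤ u n := hmono hk
            _ = t := hn
            _ ≤ T := htT
      linarith
  rw [hsum, ← hn]
  exact key n le_rfl

lemma partSums_bddAbove {T : ℝ} {ω : ℝ → ℝ → ℝ} {α s t : ℝ}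
    (hnonneg : ∀ s t, 0 ≤ ω s t)
    (hsuper : ∀ s u t, 0 ≤ s → s ≤ u → u ≤ t → t ≤ T → ω s u + ω u t ≤ ω s t)
    (h0s : 0 ≤ s) (hst : s ≤ t) (htT : t ≤ T) :
    BddAbove (partSums ω α s t) :=
  ⟨ω s t, fun _ hx => partSums_bdd hnonneg hsuper h0s hst htT _ hx⟩

/-- existence of a fine partition, via uniform continuity on a compact square -/
lemma partSums_nonempty {ω : ℝ → ℝ → ℝ} {α : ℝ} (hα0 : 0 < α)
    (hcont : Continuous fun q : ℝ × ℝ => ω q.1 q.2)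
    (hnonneg : ∀ s t, 0 ≤ ω s t) (hdiag : ∀ s, ω s s = 0)
    {a b : ℝ} (hab : a ≤ b) : (partSums ω α a b).Nonempty := by
  rcases eq_or_lt_of_le hab with h | h
  · subst h
    exact ⟨0, partSums_of_nat ω α a a 0 0 (fun _ => a) monotone_const rfl rfl
      (by omega) (by simp)⟩
  · -- uniform continuity on [a,b] × [a,b]
    have hK : IsCompact ((Set.Icc a b) ×ˢ (Set.Icc a b)) :=
      isCompact_Icc.prod isCompact_Icc
    have huc := hK.uniformContinuousOn_of_continuous hcont.continuousOn
    obtain ⟨δ, hδ0, hδ⟩ := Metric.uniformContinuousOn_iff.mp huc α hα0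
    obtain ⟨n, hnδ⟩ := exists_nat_gt ((b - a) / δ)
    have hn0 : 0 < n := by
      have : 0 < (b - a) / δ := div_pos (by linarith) hδ0
      exact_mod_cast this.trans hnδ
    have hn0' : (0 : ℝ) < n := by exact_mod_cast hn0
    have hstep : (b - a) / n < δ := by
      rw [div_lt_iff₀ hn0']
      have := (div_lt_iff₀ hδ0).mp hnδ
      linarith
    have hstep0 : 0 ≤ (b - a) / n := div_nonneg (by linarith) hn0'.le
    set u : ℕ → ℝ := fun k => a + (min k n : ℕ) * ((b - a) / n) with hu
    have humem : ∀ k, u k ∈ Set.Icc a b := by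
      intro k
      constructor
      · simp only [hu]
        nlinarith [(Nat.cast_nonneg (min k n) : (0:ℝ) ≤ ((min k n : ℕ) : ℝ))]
      · simp only [hu]
        have h1 : ((min k n : ℕ) : ℝ) ≤ n := by
          exact_mod_cast Nat.min_le_right k n
        have : ((min k n : ℕ) : ℝ) * ((b - a) / n) ≤ n * ((b - a) / n) := by
          apply mul_le_mul_of_nonneg_right h1 hstep0
        rw [mul_div_cancel₀ _ (ne_of_gt hn0')] at this
        linarith
    refine ⟨_, partSums_of_nat ω α a b _ n u ?_ ?_ ?_ ?_ rfl⟩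
    · intro j k hjk
      simp only [hu]
      have : ((min j n : ℕ) : ℝ) ≤ ((min k n : ℕ) : ℝ) := by
        exact_mod_cast min_le_min hjk le_rfl
      nlinarith
    · simp [hu]
    · simp only [hu, min_self]
      rw [mul_div_cancel₀ _ (ne_of_gt hn0')]
      ring
    · intro k hk
      have hdist : dist (u k, u (k + 1)) (u k, u k) < δ := by
        rw [Prod.dist_eq]
        simp only [dist_self]
        have h1 : min k n = k := by omega
        have h2 : min (k + 1) n = k + 1 := by omega
        have : u (k + 1) - u k = (b - a) / n := by
          simp only [hu, h1, h2]
          push_cast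
          ring
        rw [Real.dist_eq, this]
        rw [abs_of_nonneg hstep0, max_eq_right hstep0]; exact hstep
      have hmem1 : (u k, u (k + 1)) ∈ (Set.Icc a b) ×ˢ (Set.Icc a b) :=
        ⟨humem k, humem (k + 1)⟩
      have hmem2 : (u k, u k) ∈ (Set.Icc a b) ×ˢ (Set.Icc a b) :=
        ⟨humem k, humem k⟩
      have := hδ _ hmem1 _ hmem2 hdist
      simp only [Real.dist_eq, hdiag (u k)] at this
      rw [sub_zero, abs_of_nonneg (hnonneg _ _)] at this
      exact this.le

/-- `ω^α` is a control: superadditive, monotone, zero on the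
diagonal. -/
theorem omega_alpha_is_control (T : ℝ) (hT : 0 ≤ T) (ω : ℝ → ℝ → ℝ)
    (α : ℝ) (hα0 : 0 < α) (hα1 : α ≤ 1)
    (hcont : Continuous fun q : ℝ × ℝ => ω q.1 q.2)
    (hnonneg : ∀ s t, 0 ≤ ω s t)
    (hdiag : ∀ s, ω s s = 0)
    (hsuper : ∀ s u t, 0 ≤ s → s ≤ u → u ≤ t → t ≤ T → ω s u + ω u t ≤ ω s t) :
    (∀ s u t, 0 ≤ s → s ≤ u → u ≤ t → t ≤ T →
        omegaTrunc ω α s u + omegaTrunc ω α u t ≤ omegaTrunc ω α s t) ∧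
    (∀ s s' t' t, 0 ≤ s → s ≤ s' → s' ≤ t' → t' ≤ t → t ≤ T →
        omegaTrunc ω α s' t' ≤ omegaTrunc ω α s t) ∧
    (∀ s, 0 ≤ s → s ≤ T → omegaTrunc ω α s s = 0) := by
  refine ⟨?_, ?_, ?_⟩
  · -- superadditivity
    intro s u t h0s hsu hut htT
    have hA : (partSums ω α s u).Nonempty := partSums_nonempty hα0 hcont hnonneg hdiag hsu
    have hB : (partSums ω α u t).Nonempty := partSums_nonempty hα0 hcont hnonneg hdiag hut
    have hC : BddAbove (partSums ω α s t) :=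
      partSums_bddAbove hnonneg hsuper h0s (hsu.trans hut) htT
    have key : ∀ x ∈ partSums ω α s u, ∀ y ∈ partSums ω α u t,
        x + y ≤ sSup (partSums ω α s t) :=
      fun x hx y hy => le_csSup hC (partSums_add hx hy)
    have h1 : ∀ x ∈ partSums ω α s u,
        sSup (partSums ω α u t) ≤ sSup (partSums ω α s t) - x := by
      intro x hx
      refine csSup_le hB fun y hy => ?_
      linarith [key x hx y hy]
    have h2 : sSup (partSums ω α s u) ≤
        sSup (partSums ω α s t) - sSup (partSums ω α u t) := by
      refine csSup_le hA fun x hx => ?_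
      linarith [h1 x hx]
    unfold omegaTrunc
    linarith
  · -- monotonicity
    intro s s' t' t h0s hss' hs't' ht't htT
    have hne' : (partSums ω α s' t').Nonempty :=
      partSums_nonempty hα0 hcont hnonneg hdiag hs't'
    have hC : BddAbove (partSums ω α s t) :=
      partSums_bddAbove hnonneg hsuper h0s (hss'.trans (hs't'.trans ht't)) htT
    obtain ⟨y1, hy1⟩ := partSums_nonempty hα0 hcont hnonneg hdiag hss' (a := s) (b := s')
    obtain ⟨y2, hy2⟩ := partSums_nonempty hα0 hcont hnonneg hdiag ht't (a := t') (b := t)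
    refine csSup_le hne' fun x hx => ?_
    have hmem : y1 + x + y2 ∈ partSums ω α s t :=
      partSums_add (partSums_add hy1 hx) hy2
    have hle : x ≤ y1 + x + y2 := by
      have := partSums_nonneg hnonneg hy1
      have := partSums_nonneg hnonneg hy2
      linarith
    exact hle.trans (le_csSup hC hmem)
  · -- diagonal
    intro s h0s hsT
    have hset : partSums ω α s s = {0} := by
      ext x
      constructor
      · intro hx
        obtain ⟨n, u, hmono, h0, hn, -, hsum⟩ := nat_of_partSums hx
        have huconst : ∀ k, k ≤ n → u k = s := by
          intro k hk
          have h1 : s ≤ u k := h0 ▸ hmono (Nat.zero_le _)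
          have h2 : u k ≤ s := hn ▸ hmono hk
          linarith
        have : x = 0 := by
          rw [hsum]
          refine Finset.sum_eq_zero fun k hk => ?_
          have hk' := Finset.mem_range.mp hk
          rw [huconst k (by omega), huconst (k + 1) (by omega), hdiag]
        simpa using this
      · intro hx
        simp only [Set.mem_singleton_iff] at hx
        subst hx
        exact partSums_of_nat ω α s s 0 0 (fun _ => s) monotone_const rfl rfl
          (by omega) (by simp)
    rw [omegaTrunc, hset, csSup_singleton]

end
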